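/- arXiv:1810.04288 — 3 statements merged into one kernel-verified Lean document; each statement's English description precedes it below -/
import Mathlib

section
/- Let (P, ≤) be a partial order that is strongly atomic and satisfies the local ascending chain condition. Then for any p, q ∈ P with p < q, there is a finite sequence p = p₀ < p₁ < ⋯ < pₙ = q such that for every i < n the open interval (pᵢ, pᵢ₊₁) is empty, i.e., there is no element r with pᵢ < r < pᵢ₊₁. -/
/-- A partial order satisfies the *local ascending chain condition* if every
monotone sequence that is bounded above by some element is eventually constant. -/
def LocalACC (P : Type*) [PartialOrder P] : Prop :=
  ∀ p : P, ∀ f : ℕ → P, Monotone f → (∀ n, f n ≤ p) →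
    ∃ N, ∀ n ≥ N, f n = f (n + 1)

/-- A partial order is *strongly atomic* if whenever `p < q` there is `r` with
`p < r ≤ q` and the open interval `(p, r)` empty. -/
def StronglyAtomicOrder (P : Type*) [PartialOrder P] : Prop :=
  ∀ p q : P, p < q → ∃ r : P, p < r ∧ r ≤ q ∧ ∀ x : P, ¬ (p < x ∧ x < r)

theorem abstract_factorization {P : Type*} [PartialOrder P]
    (hatomic : StronglyAtomicOrder P) (hacc : LocalACC P)
    {p q : P} (hpq : p < q) :
    ∃ (n : ℕ) (f : Fin (n + 1) → P), f 0 = p ∧ f (Fin.last n) = q ∧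
      (∀ i : Fin n, f i.castSucc < f i.succ) ∧
      (∀ i : Fin n, ∀ r : P, ¬ (f i.castSucc < r ∧ r < f i.succ)) := by
  classical
  -- Define the step function and the chain
  set step : P → P := fun x => if h : x < q then (hatomic x q h).choose else x with hstep
  set g : ℕ → P := fun n => step^[n] p with hg
  have g_succ : ∀ n, g (n + 1) = step (g n) := by
    intro n
    simp only [hg, Function.iterate_succ_apply']
  have step_lt : ∀ x, x < q → x < step x ∧ step x ≤ q ∧
      ∀ r : P, ¬ (x < r ∧ r < step x) := by
    intro x hx
    have := (hatomic x q hx).choose_spec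
    simp only [hstep, dif_pos hx]
    exact ⟨this.1, this.2.1, this.2.2⟩
  have step_eq : ∀ x, ¬ x < q → step x = x := by
    intro x hx; simp only [hstep, dif_neg hx]
  have g_le : ∀ n, g n ≤ q := by
    intro n
    induction n with
    | zero => exact hpq.le
    | succ n ih =>
      rw [g_succ]
      by_cases h : g n < q
      · exact (step_lt _ h).2.1
      · rw [step_eq _ h]; exact ih
  have g_mono : Monotone g := by
    apply monotone_nat_of_le_succ
    intro n
    rw [g_succ]
    by_cases h : g n < q
    · exact (step_lt _ h).1.le
    · rw [step_eq _ h]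
  obtain ⟨N, hN⟩ := hacc q g g_mono g_le
  have hgNq : g N = q := by
    by_contra h
    have hlt : g N < q := lt_of_le_of_ne (g_le N) h
    have := (step_lt _ hlt).1
    rw [← g_succ, ← hN N le_rfl] at this
    exact lt_irrefl _ this
  have hex : ∃ n, g n = q := ⟨N, hgNq⟩
  set M := Nat.find hex with hM
  have hgM : g M = q := Nat.find_spec hex
  have hlt_M : ∀ k < M, g k ≠ q := fun k hk => Nat.find_min hex hk
  have hg0 : g 0 = p := rfl
  refine ⟨M, fun i => g i.val, hg0, by simp [Fin.last, hgM], ?_, ?_⟩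
  · intro i
    have hi : g i.val < q := lt_of_le_of_ne (g_le _) (hlt_M _ i.isLt)
    have := (step_lt _ hi).1
    rw [← g_succ] at this
    simpa using this
  · intro i r hr
    have hi : g i.val < q := lt_of_le_of_ne (g_le _) (hlt_M _ i.isLt)
    have := (step_lt _ hi).2.2 r
    rw [← g_succ] at this
    exact this (by simpa using hr)
end

section
/- Let (P, ≤) be a join-semilattice (every pair of elements has a least upper bound) satisfying the local ascending chain condition. Then every nonempty subset S ⊆ P that has at least one lower bound has a greatest lower bound in P. Moreover, this greatest lower bound is the maximum element of the set B = {p ∈ P : p ≤ q for all q ∈ S} of lower bounds of S. -/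
/-- In an upper semilattice with the local ascending chain condition, every
nonempty set of elements admitting a lower bound has a greatest lower bound,
which is moreover the maximum of the set of lower bounds. -/
theorem semilattice_localACC_glb
    {P : Type*} [SemilatticeSup P] (hacc : LocalACC P)
    (S : Set P) (hS : S.Nonempty) (hbd : (lowerBounds S).Nonempty) :
    ∃ b₀ : P, IsGLB S b₀ ∧ IsGreatest (lowerBounds S) b₀ := by
  obtain ⟨q, hq⟩ := hS
  suffices h : ∃ b₀, IsGreatest (lowerBounds S) b₀ by
    obtain ⟨b₀, hb⟩ := h; exact ⟨b₀, hb, hb⟩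
  by_contra h
  push_neg at h
  have key : ∀ b ∈ lowerBounds S, ∃ c ∈ lowerBounds S, ¬ c ≤ b := by
    intro b hb
    by_contra hc; push_neg at hc
    exact h b ⟨hb, hc⟩
  choose g hg1 hg2 using key
  obtain ⟨b, hb⟩ := hbd
  have supmem : ∀ x ∈ lowerBounds S, ∀ y ∈ lowerBounds S, x ⊔ y ∈ lowerBounds S := by
    intro x hx y hy s hs
    exact sup_le (hx hs) (hy hs)
  let F : ℕ → {x : P // x ∈ lowerBounds S} := fun n =>
    Nat.rec ⟨b, hb⟩ (fun _ p => ⟨p.1 ⊔ g p.1 p.2, supmem _ p.2 _ (hg1 p.1 p.2)⟩) n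
  have hstep : ∀ n, (F (n+1)).1 = (F n).1 ⊔ g (F n).1 (F n).2 := fun n => rfl
  have hle : ∀ n, (F n).1 ≤ (F (n+1)).1 := fun n => by rw [hstep]; exact le_sup_left
  have hmono : Monotone (fun n => (F n).1) := monotone_nat_of_le_succ hle
  have hbnd : ∀ n, (F n).1 ≤ q := fun n => (F n).2 hq
  obtain ⟨N, hN⟩ := hacc q (fun n => (F n).1) hmono hbnd
  have hEq := hN N (le_refl N)
  apply hg2 (F N).1 (F N).2
  have : g (F N).1 (F N).2 ≤ (F (N+1)).1 := by rw [hstep]; exact le_sup_right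
  exact this.trans hEq.ge
end

section
/- The parameter order is a well-order. Precisely: consider the set of parameters, i.e., finite strictly decreasing lists of ordinals, ordered by the lexicographic order on lists (comparing entries from the first position at which they differ, with a proper initial segment counted as smaller than any extension, i.e., List.Lex of the order < on ordinals). This order is a linear order on the set of strictly decreasing lists of ordinals, and it is well-founded; hence it is a well-order. (Note that the restriction to strictly decreasing lists is essential: the lexicographic order on arbitrary finite lists of ordinals is not well-founded.) -/
/-- A *parameter* is a finite strictly decreasing sequence of ordinals,
represented as a list in which each entry is strictly greater than the next. -/
def Parameter : Type _ :=
  {l : List Ordinal // l.Chain' (· > ·)}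

/-- The *parameter order*: the lexicographic order on parameters. -/
def ParameterLt (p q : Parameter) : Prop :=
  List.Lex (· < ·) p.val q.val

/-- The parameter order is a well-order on the set of strictly decreasing
lists of ordinals: it is a (strict) linear order and it is well-founded. -/
theorem parameter_order_is_wellorder : IsWellOrder Parameter ParameterLt := by
  have hwf : WellFounded ParameterLt :=
    (wellFounded_lt (α := Ordinal)).list_chain' (r := (· < ·))
  haveI : IsTrichotomous Parameter ParameterLt := by
    constructor
    intro a b hab hba
    refine Or.elim (?_ : ParameterLt a b ∨ a = b ∨ ParameterLt b a) (fun h => absurd h hab) (fun h => h.elim id (fun h => absurd h hba))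
    rcases trichotomous_of (List.Lex (α := Ordinal) (· < ·)) a.val b.val with h | h | h
    · exact Or.inl h
    · exact Or.inr (Or.inl (Subtype.ext h))
    · exact Or.inr (Or.inr h)
  haveI : IsTrans Parameter ParameterLt := by
    constructor
    intro a b c hab hbc
    exact List.lex_trans (fun h1 h2 => lt_trans h1 h2) hab hbc
  haveI : IsWellFounded Parameter ParameterLt := ⟨hwf⟩
  exact ⟨⟩
end
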